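/- Decomposition theorem of mixed variance: Let A be a category with variance (E,M) and C a category. The assignment F ↦ (F|_E, F|_M) is a bijection between functors F : A → C of variance (E,M) and compatible pairs consisting of a covariant functor G : E → C and a contravariant functor H : M → C agreeing on objects and satisfying G(f^e)∘H(f_m) = H(f^m)∘G(f_e) for every morphism f of A; the inverse sends (G,H) to the functor F with F(f) = G(f^e)∘H(f_m). -/

import Mathlib

open CategoryTheory

universe v u v₂ u₂

/-- A variance `(E,M)` on a category `C`: wide subcategories such that both `(E,M)` and
`(M,E)` are strict factorization systems.  The chosen terminating factorization of `f` is
`f = tm f ∘ te f` (i.e. `f = f^m ∘ f^e`) through the object `tObj f` (the terminating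
object `f_t`), and the chosen starting factorization is `f = se f ∘ sm f`
(i.e. `f = f_e ∘ f_m`) through `sObj f` (the starting object `f_s`). -/
structure Variance (C : Type u) [Category.{v} C] where
  E : MorphismProperty C
  M : MorphismProperty C
  E_id : ∀ X : C, E (𝟙 X)
  M_id : ∀ X : C, M (𝟙 X)
  E_comp : ∀ {X Y Z : C} (f : X ⟶ Y) (g : Y ⟶ Z), E f → E g → E (f ≫ g)
  M_comp : ∀ {X Y Z : C} (f : X ⟶ Y) (g : Y ⟶ Z), M f → M g → M (f ≫ g)
  tObj : ∀ {X Y : C}, (X ⟶ Y) → C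
  te : ∀ {X Y : C} (f : X ⟶ Y), X ⟶ tObj f
  tm : ∀ {X Y : C} (f : X ⟶ Y), tObj f ⟶ Y
  te_mem : ∀ {X Y : C} (f : X ⟶ Y), E (te f)
  tm_mem : ∀ {X Y : C} (f : X ⟶ Y), M (tm f)
  t_fac : ∀ {X Y : C} (f : X ⟶ Y), te f ≫ tm f = f
  t_uniq : ∀ {X Y : C} (f : X ⟶ Y) (Z : C) (e : X ⟶ Z) (m : Z ⟶ Y),
      E e → M m → e ≫ m = f →
      (⟨Z, e, m⟩ : Σ Z : C, (X ⟶ Z) × (Z ⟶ Y)) = ⟨tObj f, te f, tm f⟩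
  sObj : ∀ {X Y : C}, (X ⟶ Y) → C
  sm : ∀ {X Y : C} (f : X ⟶ Y), X ⟶ sObj f
  se : ∀ {X Y : C} (f : X ⟶ Y), sObj f ⟶ Y
  sm_mem : ∀ {X Y : C} (f : X ⟶ Y), M (sm f)
  se_mem : ∀ {X Y : C} (f : X ⟶ Y), E (se f)
  s_fac : ∀ {X Y : C} (f : X ⟶ Y), sm f ≫ se f = f
  s_uniq : ∀ {X Y : C} (f : X ⟶ Y) (Z : C) (m : X ⟶ Z) (e : Z ⟶ Y),
      M m → E e → m ≫ e = f →
      (⟨Z, m, e⟩ : Σ Z : C, (X ⟶ Z) × (Z ⟶ Y)) = ⟨sObj f, sm f, se f⟩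

namespace Variance

variable {C : Type u} [Category.{v} C] (V : Variance C)

lemma tObj_of_E {X Y : C} (f : X ⟶ Y) (h : V.E f) : V.tObj f = Y :=
  (congrArg Sigma.fst (V.t_uniq f Y f (𝟙 Y) h (V.M_id Y) (Category.comp_id f))).symm

lemma tObj_of_M {X Y : C} (f : X ⟶ Y) (h : V.M f) : V.tObj f = X :=
  (congrArg Sigma.fst (V.t_uniq f X (𝟙 X) f (V.E_id X) h (Category.id_comp f))).symm

lemma sObj_of_M {X Y : C} (f : X ⟶ Y) (h : V.M f) : V.sObj f = Y :=
  (congrArg Sigma.fst (V.s_uniq f Y f (𝟙 Y) h (V.E_id Y) (Category.comp_id f))).symm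

lemma sObj_of_E {X Y : C} (f : X ⟶ Y) (h : V.E f) : V.sObj f = X :=
  (congrArg Sigma.fst (V.s_uniq f X (𝟙 X) f (V.M_id X) h (Category.id_comp f))).symm

lemma tObj_id (X : C) : V.tObj (𝟙 X) = X := V.tObj_of_E _ (V.E_id X)

lemma sObj_id (X : C) : V.sObj (𝟙 X) = X := V.sObj_of_E _ (V.E_id X)

lemma s_comp_aux {x y z : C} (f : x ⟶ y) (g : y ⟶ z) :
    (V.sm f ≫ V.sm (V.se f ≫ V.sm g)) ≫ V.se (V.se f ≫ V.sm g) ≫ V.se g = f ≫ g := by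
  have h : V.sm (V.se f ≫ V.sm g) ≫ V.se (V.se f ≫ V.sm g) = V.se f ≫ V.sm g :=
    V.s_fac _
  rw [Category.assoc, ← Category.assoc (V.sm (V.se f ≫ V.sm g)), h]
  simp only [Category.assoc]
  rw [V.s_fac g, ← Category.assoc, V.s_fac f]

lemma t_comp_aux {x y z : C} (f : x ⟶ y) (g : y ⟶ z) :
    (V.te f ≫ V.te (V.tm f ≫ V.te g)) ≫ V.tm (V.tm f ≫ V.te g) ≫ V.tm g = f ≫ g := by
  have h : V.te (V.tm f ≫ V.te g) ≫ V.tm (V.tm f ≫ V.te g) = V.tm f ≫ V.te g :=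
    V.t_fac _
  rw [Category.assoc, ← Category.assoc (V.te (V.tm f ≫ V.te g)), h]
  simp only [Category.assoc]
  rw [V.t_fac g, ← Category.assoc, V.t_fac f]

/-- `(gf)_s = (g_m f_e)_s`. -/
lemma sObj_comp {x y z : C} (f : x ⟶ y) (g : y ⟶ z) :
    V.sObj (f ≫ g) = V.sObj (V.se f ≫ V.sm g) :=
  (congrArg Sigma.fst (V.s_uniq (f ≫ g) (V.sObj (V.se f ≫ V.sm g))
    (V.sm f ≫ V.sm (V.se f ≫ V.sm g)) (V.se (V.se f ≫ V.sm g) ≫ V.se g)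
    (V.M_comp _ _ (V.sm_mem f) (V.sm_mem _))
    (V.E_comp _ _ (V.se_mem _) (V.se_mem g)) (V.s_comp_aux f g))).symm

/-- `(gf)_t = (g^e f^m)_t`. -/
lemma tObj_comp {x y z : C} (f : x ⟶ y) (g : y ⟶ z) :
    V.tObj (f ≫ g) = V.tObj (V.tm f ≫ V.te g) :=
  (congrArg Sigma.fst (V.t_uniq (f ≫ g) (V.tObj (V.tm f ≫ V.te g))
    (V.te f ≫ V.te (V.tm f ≫ V.te g)) (V.tm (V.tm f ≫ V.te g) ≫ V.tm g)
    (V.E_comp _ _ (V.te_mem f) (V.te_mem _))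
    (V.M_comp _ _ (V.tm_mem _) (V.tm_mem g)) (V.t_comp_aux f g))).symm

end Variance

section Helpers

open CategoryTheory

variable {C : Type u} [Category.{v} C] (V : Variance C)

namespace Variance

lemma s_unique' {X Y Z : C} (f : X ⟶ Y) (m : X ⟶ Z) (e : Z ⟶ Y)
    (hm : V.M m) (he : V.E e) (hfac : m ≫ e = f) :
    ∃ h : Z = V.sObj f, V.sm f = m ≫ eqToHom h ∧ V.se f = eqToHom h.symm ≫ e := by
  have H := V.s_uniq f Z m e hm he hfac
  have h : Z = V.sObj f := congrArg Sigma.fst H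
  subst h
  obtain ⟨-, H2⟩ := Sigma.mk.inj_iff.mp H
  obtain ⟨h1, h2⟩ := Prod.mk_inj.mp (eq_of_heq H2)
  exact ⟨rfl, by simp [← h1], by simp [← h2]⟩

lemma t_unique' {X Y Z : C} (f : X ⟶ Y) (e : X ⟶ Z) (m : Z ⟶ Y)
    (he : V.E e) (hm : V.M m) (hfac : e ≫ m = f) :
    ∃ h : Z = V.tObj f, V.te f = e ≫ eqToHom h ∧ V.tm f = eqToHom h.symm ≫ m := by
  have H := V.t_uniq f Z e m he hm hfac
  have h : Z = V.tObj f := congrArg Sigma.fst H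
  subst h
  obtain ⟨-, H2⟩ := Sigma.mk.inj_iff.mp H
  obtain ⟨h1, h2⟩ := Prod.mk_inj.mp (eq_of_heq H2)
  exact ⟨rfl, by simp [← h1], by simp [← h2]⟩

lemma E_eqToHom {X Y : C} (h : X = Y) : V.E (eqToHom h) := by
  cases h; simpa using V.E_id X

lemma M_eqToHom {X Y : C} (h : X = Y) : V.M (eqToHom h) := by
  cases h; simpa using V.M_id X

lemma sm_of_E {X Y : C} (f : X ⟶ Y) (h : V.E f) :
    V.sm f = eqToHom (V.sObj_of_E f h).symm := by
  obtain ⟨k, h1, -⟩ := V.s_unique' f (𝟙 X) f (V.M_id X) h (Category.id_comp f)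
  simpa using h1

lemma se_of_E {X Y : C} (f : X ⟶ Y) (h : V.E f) :
    V.se f = eqToHom (V.sObj_of_E f h) ≫ f := by
  obtain ⟨k, -, h2⟩ := V.s_unique' f (𝟙 X) f (V.M_id X) h (Category.id_comp f)
  exact h2

lemma sm_of_M {X Y : C} (f : X ⟶ Y) (h : V.M f) :
    V.sm f = f ≫ eqToHom (V.sObj_of_M f h).symm := by
  obtain ⟨k, h1, -⟩ := V.s_unique' f f (𝟙 Y) h (V.E_id Y) (Category.comp_id f)
  exact h1

lemma se_of_M {X Y : C} (f : X ⟶ Y) (h : V.M f) :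
    V.se f = eqToHom (V.sObj_of_M f h) := by
  obtain ⟨k, -, h2⟩ := V.s_unique' f f (𝟙 Y) h (V.E_id Y) (Category.comp_id f)
  simpa using h2

lemma te_of_E {X Y : C} (f : X ⟶ Y) (h : V.E f) :
    V.te f = f ≫ eqToHom (V.tObj_of_E f h).symm := by
  obtain ⟨k, h1, -⟩ := V.t_unique' f f (𝟙 Y) h (V.M_id Y) (Category.comp_id f)
  exact h1

lemma tm_of_E {X Y : C} (f : X ⟶ Y) (h : V.E f) :
    V.tm f = eqToHom (V.tObj_of_E f h) := by
  obtain ⟨k, -, h2⟩ := V.t_unique' f f (𝟙 Y) h (V.M_id Y) (Category.comp_id f)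
  simpa using h2

lemma te_of_M {X Y : C} (f : X ⟶ Y) (h : V.M f) :
    V.te f = eqToHom (V.tObj_of_M f h).symm := by
  obtain ⟨k, h1, -⟩ := V.t_unique' f (𝟙 X) f (V.E_id X) h (Category.id_comp f)
  simpa using h1

lemma tm_of_M {X Y : C} (f : X ⟶ Y) (h : V.M f) :
    V.tm f = eqToHom (V.tObj_of_M f h) ≫ f := by
  obtain ⟨k, -, h2⟩ := V.t_unique' f (𝟙 X) f (V.E_id X) h (Category.id_comp f)
  exact h2

lemma sm_id (X : C) : V.sm (𝟙 X) = eqToHom (V.sObj_id X).symm :=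
  V.sm_of_E (𝟙 X) (V.E_id X)

lemma se_id (X : C) : V.se (𝟙 X) = eqToHom (V.sObj_id X) := by
  simpa using V.se_of_E (𝟙 X) (V.E_id X)

lemma te_id (X : C) : V.te (𝟙 X) = eqToHom (V.tObj_id X).symm := by
  simpa using V.te_of_E (𝟙 X) (V.E_id X)

lemma tm_id (X : C) : V.tm (𝟙 X) = eqToHom (V.tObj_id X) :=
  V.tm_of_E (𝟙 X) (V.E_id X)

lemma sm_comp {x y z : C} (f : x ⟶ y) (g : y ⟶ z) :
    V.sm (f ≫ g) = (V.sm f ≫ V.sm (V.se f ≫ V.sm g)) ≫ eqToHom (V.sObj_comp f g).symm := by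
  obtain ⟨k, h1, -⟩ := V.s_unique' (f ≫ g) (V.sm f ≫ V.sm (V.se f ≫ V.sm g))
    (V.se (V.se f ≫ V.sm g) ≫ V.se g)
    (V.M_comp _ _ (V.sm_mem f) (V.sm_mem _))
    (V.E_comp _ _ (V.se_mem _) (V.se_mem g)) (V.s_comp_aux f g)
  exact h1

lemma se_comp {x y z : C} (f : x ⟶ y) (g : y ⟶ z) :
    V.se (f ≫ g) = eqToHom (V.sObj_comp f g) ≫ V.se (V.se f ≫ V.sm g) ≫ V.se g := by
  obtain ⟨k, -, h2⟩ := V.s_unique' (f ≫ g) (V.sm f ≫ V.sm (V.se f ≫ V.sm g))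
    (V.se (V.se f ≫ V.sm g) ≫ V.se g)
    (V.M_comp _ _ (V.sm_mem f) (V.sm_mem _))
    (V.E_comp _ _ (V.se_mem _) (V.se_mem g)) (V.s_comp_aux f g)
  exact h2

lemma te_comp {x y z : C} (f : x ⟶ y) (g : y ⟶ z) :
    V.te (f ≫ g) = (V.te f ≫ V.te (V.tm f ≫ V.te g)) ≫ eqToHom (V.tObj_comp f g).symm := by
  obtain ⟨k, h1, -⟩ := V.t_unique' (f ≫ g) (V.te f ≫ V.te (V.tm f ≫ V.te g))
    (V.tm (V.tm f ≫ V.te g) ≫ V.tm g)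
    (V.E_comp _ _ (V.te_mem f) (V.te_mem _))
    (V.M_comp _ _ (V.tm_mem _) (V.tm_mem g)) (V.t_comp_aux f g)
  exact h1

lemma tm_comp {x y z : C} (f : x ⟶ y) (g : y ⟶ z) :
    V.tm (f ≫ g) = eqToHom (V.tObj_comp f g) ≫ V.tm (V.tm f ≫ V.te g) ≫ V.tm g := by
  obtain ⟨k, -, h2⟩ := V.t_unique' (f ≫ g) (V.te f ≫ V.te (V.tm f ≫ V.te g))
    (V.tm (V.tm f ≫ V.te g) ≫ V.tm g)
    (V.E_comp _ _ (V.te_mem f) (V.te_mem _))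
    (V.M_comp _ _ (V.tm_mem _) (V.tm_mem g)) (V.t_comp_aux f g)
  exact h2

lemma sObj_conj {X X' Y Y' : C} (h : X' = X) (h' : Y = Y') (f : X ⟶ Y) :
    V.sObj (eqToHom h ≫ f ≫ eqToHom h') = V.sObj f := by
  obtain ⟨k, -, -⟩ := V.s_unique' (eqToHom h ≫ f ≫ eqToHom h')
    (eqToHom h ≫ V.sm f) (V.se f ≫ eqToHom h')
    (V.M_comp _ _ (V.M_eqToHom h) (V.sm_mem f))
    (V.E_comp _ _ (V.se_mem f) (V.E_eqToHom h'))
    (by rw [Category.assoc, ← Category.assoc (V.sm f), V.s_fac f])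
  exact k.symm

lemma sm_conj {X X' Y Y' : C} (h : X' = X) (h' : Y = Y') (f : X ⟶ Y) :
    V.sm (eqToHom h ≫ f ≫ eqToHom h') =
      eqToHom h ≫ V.sm f ≫ eqToHom (V.sObj_conj h h' f).symm := by
  obtain ⟨k, h1, -⟩ := V.s_unique' (eqToHom h ≫ f ≫ eqToHom h')
    (eqToHom h ≫ V.sm f) (V.se f ≫ eqToHom h')
    (V.M_comp _ _ (V.M_eqToHom h) (V.sm_mem f))
    (V.E_comp _ _ (V.se_mem f) (V.E_eqToHom h'))
    (by rw [Category.assoc, ← Category.assoc (V.sm f), V.s_fac f])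
  rw [h1]; simp

lemma se_conj {X X' Y Y' : C} (h : X' = X) (h' : Y = Y') (f : X ⟶ Y) :
    V.se (eqToHom h ≫ f ≫ eqToHom h') =
      eqToHom (V.sObj_conj h h' f) ≫ V.se f ≫ eqToHom h' := by
  obtain ⟨k, -, h2⟩ := V.s_unique' (eqToHom h ≫ f ≫ eqToHom h')
    (eqToHom h ≫ V.sm f) (V.se f ≫ eqToHom h')
    (V.M_comp _ _ (V.M_eqToHom h) (V.sm_mem f))
    (V.E_comp _ _ (V.se_mem f) (V.E_eqToHom h'))
    (by rw [Category.assoc, ← Category.assoc (V.sm f), V.s_fac f])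
  rw [h2]

lemma tObj_conj {X X' Y Y' : C} (h : X' = X) (h' : Y = Y') (f : X ⟶ Y) :
    V.tObj (eqToHom h ≫ f ≫ eqToHom h') = V.tObj f := by
  obtain ⟨k, -, -⟩ := V.t_unique' (eqToHom h ≫ f ≫ eqToHom h')
    (eqToHom h ≫ V.te f) (V.tm f ≫ eqToHom h')
    (V.E_comp _ _ (V.E_eqToHom h) (V.te_mem f))
    (V.M_comp _ _ (V.tm_mem f) (V.M_eqToHom h'))
    (by rw [Category.assoc, ← Category.assoc (V.te f), V.t_fac f])
  exact k.symm

lemma te_conj {X X' Y Y' : C} (h : X' = X) (h' : Y = Y') (f : X ⟶ Y) :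
    V.te (eqToHom h ≫ f ≫ eqToHom h') =
      eqToHom h ≫ V.te f ≫ eqToHom (V.tObj_conj h h' f).symm := by
  obtain ⟨k, h1, -⟩ := V.t_unique' (eqToHom h ≫ f ≫ eqToHom h')
    (eqToHom h ≫ V.te f) (V.tm f ≫ eqToHom h')
    (V.E_comp _ _ (V.E_eqToHom h) (V.te_mem f))
    (V.M_comp _ _ (V.tm_mem f) (V.M_eqToHom h'))
    (by rw [Category.assoc, ← Category.assoc (V.te f), V.t_fac f])
  rw [h1]; simp

lemma tm_conj {X X' Y Y' : C} (h : X' = X) (h' : Y = Y') (f : X ⟶ Y) :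
    V.tm (eqToHom h ≫ f ≫ eqToHom h') =
      eqToHom (V.tObj_conj h h' f) ≫ V.tm f ≫ eqToHom h' := by
  obtain ⟨k, -, h2⟩ := V.t_unique' (eqToHom h ≫ f ≫ eqToHom h')
    (eqToHom h ≫ V.te f) (V.tm f ≫ eqToHom h')
    (V.E_comp _ _ (V.E_eqToHom h) (V.te_mem f))
    (V.M_comp _ _ (V.tm_mem f) (V.M_eqToHom h'))
    (by rw [Category.assoc, ← Category.assoc (V.te f), V.t_fac f])
  rw [h2]

end Variance

end Helpers

/-- A functor of variance `(E,M)` (given by the variance structure `V`): it sends a morphism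
`f` to a morphism `F(f) : F(f_s) ⟶ F(f_t)`, preserves identities, and satisfies the two
mixed functoriality equations
`F(gf) = F((g^e f^m)^e) ∘ F(f) ∘ F((g_m f_e)_m)` and
`F(gf) = F((g^e f^m)^m) ∘ F(g) ∘ F((g_m f_e)_e)`. -/
structure VFunctor {C : Type u} [Category.{v} C] (V : Variance C)
    (D : Type u₂) [Category.{v₂} D] where
  obj : C → D
  map : ∀ {X Y : C} (f : X ⟶ Y), obj (V.sObj f) ⟶ obj (V.tObj f)
  map_id : ∀ X : C,
    map (𝟙 X) = eqToHom (congrArg obj (V.sObj_id X)) ≫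
      eqToHom (congrArg obj (V.tObj_id X)).symm
  map_comp₁ : ∀ {x y z : C} (f : x ⟶ y) (g : y ⟶ z),
    map (f ≫ g) =
      eqToHom (congrArg obj ((V.sObj_comp f g).trans
        (V.sObj_of_M _ (V.sm_mem (V.se f ≫ V.sm g))).symm)) ≫
      map (V.sm (V.se f ≫ V.sm g)) ≫
      eqToHom (congrArg obj (V.tObj_of_M _ (V.sm_mem (V.se f ≫ V.sm g)))) ≫
      map f ≫
      eqToHom (congrArg obj (V.sObj_of_E _ (V.te_mem (V.tm f ≫ V.te g))).symm) ≫
      map (V.te (V.tm f ≫ V.te g)) ≫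
      eqToHom (congrArg obj ((V.tObj_of_E _ (V.te_mem (V.tm f ≫ V.te g))).trans
        (V.tObj_comp f g).symm))
  map_comp₂ : ∀ {x y z : C} (f : x ⟶ y) (g : y ⟶ z),
    map (f ≫ g) =
      eqToHom (congrArg obj ((V.sObj_comp f g).trans
        (V.sObj_of_E _ (V.se_mem (V.se f ≫ V.sm g))).symm)) ≫
      map (V.se (V.se f ≫ V.sm g)) ≫
      eqToHom (congrArg obj (V.tObj_of_E _ (V.se_mem (V.se f ≫ V.sm g)))) ≫
      map g ≫
      eqToHom (congrArg obj (V.sObj_of_M _ (V.tm_mem (V.tm f ≫ V.te g))).symm) ≫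
      map (V.tm (V.tm f ≫ V.te g)) ≫
      eqToHom (congrArg obj ((V.tObj_of_M _ (V.tm_mem (V.tm f ≫ V.te g))).trans
        (V.tObj_comp f g).symm))

namespace VFunctor

variable {C : Type u} [Category.{v} C] {V : Variance C} {D : Type u₂} [Category.{v₂} D]

lemma map_congr (F : VFunctor V D) {X Y : C} {f g : X ⟶ Y} (h : f = g) :
    F.map f = eqToHom (show F.obj (V.sObj f) = F.obj (V.sObj g) by rw [h]) ≫
      F.map g ≫ eqToHom (show F.obj (V.tObj g) = F.obj (V.tObj f) by rw [h]) := by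
  subst h; simp

lemma map_eqToHom (F : VFunctor V D) {X Y : C} (h : X = Y) :
    F.map (eqToHom h) = eqToHom (show F.obj (V.sObj (eqToHom h)) = F.obj (V.tObj (eqToHom h)) by
      rw [V.sObj_of_E _ (V.E_eqToHom h), V.tObj_of_E _ (V.E_eqToHom h), h]) := by
  cases h
  rw [F.map_congr (eqToHom_refl X rfl), F.map_id]
  simp [-eqToHom_refl]

lemma map_conj (F : VFunctor V D) {X X' Y Y' : C} (h : X' = X) (h' : Y = Y') (f : X ⟶ Y) :
    F.map (eqToHom h ≫ f ≫ eqToHom h') =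
      eqToHom (congrArg F.obj (V.sObj_conj h h' f)) ≫ F.map f ≫
        eqToHom (congrArg F.obj (V.tObj_conj h h' f)).symm := by
  cases h; cases h'
  rw [F.map_congr (show eqToHom rfl ≫ f ≫ eqToHom rfl = f by simp)]

section transport

variable (F : VFunctor V D) {X Y X' Y' : C} {u : X ⟶ Y} (p : X = X') (q : Y' = Y)
  (w : X' ⟶ Y')

lemma map_sm_eq (h : u = eqToHom p ≫ w ≫ eqToHom q)
    (pra : F.obj (V.sObj (V.sm u)) = F.obj (V.sObj (V.sm w)))
    (prb : F.obj (V.tObj (V.sm w)) = F.obj (V.tObj (V.sm u))) :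
    F.map (V.sm u) = eqToHom pra ≫ F.map (V.sm w) ≫ eqToHom prb := by
  subst h; rw [F.map_congr (V.sm_conj p q w), F.map_conj]; simp

lemma map_se_eq (h : u = eqToHom p ≫ w ≫ eqToHom q)
    (pra : F.obj (V.sObj (V.se u)) = F.obj (V.sObj (V.se w)))
    (prb : F.obj (V.tObj (V.se w)) = F.obj (V.tObj (V.se u))) :
    F.map (V.se u) = eqToHom pra ≫ F.map (V.se w) ≫ eqToHom prb := by
  subst h; rw [F.map_congr (V.se_conj p q w), F.map_conj]; simp

lemma map_te_eq (h : u = eqToHom p ≫ w ≫ eqToHom q)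
    (pra : F.obj (V.sObj (V.te u)) = F.obj (V.sObj (V.te w)))
    (prb : F.obj (V.tObj (V.te w)) = F.obj (V.tObj (V.te u))) :
    F.map (V.te u) = eqToHom pra ≫ F.map (V.te w) ≫ eqToHom prb := by
  subst h; rw [F.map_congr (V.te_conj p q w), F.map_conj]; simp

lemma map_tm_eq (h : u = eqToHom p ≫ w ≫ eqToHom q)
    (pra : F.obj (V.sObj (V.tm u)) = F.obj (V.sObj (V.tm w)))
    (prb : F.obj (V.tObj (V.tm w)) = F.obj (V.tObj (V.tm u))) :
    F.map (V.tm u) = eqToHom pra ≫ F.map (V.tm w) ≫ eqToHom prb := by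
  subst h; rw [F.map_congr (V.tm_conj p q w), F.map_conj]; simp

end transport

section reduce

variable (F : VFunctor V D) {X Y : C} {w : X ⟶ Y}

lemma map_sm_of_M (hw : V.M w)
    (pra : F.obj (V.sObj (V.sm w)) = F.obj (V.sObj w))
    (prb : F.obj (V.tObj w) = F.obj (V.tObj (V.sm w))) :
    F.map (V.sm w) = eqToHom pra ≫ F.map w ≫ eqToHom prb := by
  rw [F.map_congr (V.sm_of_M w hw),
    F.map_congr (show w ≫ eqToHom (V.sObj_of_M w hw).symm =
      eqToHom rfl ≫ w ≫ eqToHom (V.sObj_of_M w hw).symm by simp), F.map_conj]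
  simp [-eqToHom_refl]

lemma map_se_of_E (hw : V.E w)
    (pra : F.obj (V.sObj (V.se w)) = F.obj (V.sObj w))
    (prb : F.obj (V.tObj w) = F.obj (V.tObj (V.se w))) :
    F.map (V.se w) = eqToHom pra ≫ F.map w ≫ eqToHom prb := by
  rw [F.map_congr (V.se_of_E w hw),
    F.map_congr (show eqToHom (V.sObj_of_E w hw) ≫ w =
      eqToHom (V.sObj_of_E w hw) ≫ w ≫ eqToHom rfl by simp), F.map_conj]
  simp [-eqToHom_refl]

lemma map_te_of_E (hw : V.E w)
    (pra : F.obj (V.sObj (V.te w)) = F.obj (V.sObj w))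
    (prb : F.obj (V.tObj w) = F.obj (V.tObj (V.te w))) :
    F.map (V.te w) = eqToHom pra ≫ F.map w ≫ eqToHom prb := by
  rw [F.map_congr (V.te_of_E w hw),
    F.map_congr (show w ≫ eqToHom (V.tObj_of_E w hw).symm =
      eqToHom rfl ≫ w ≫ eqToHom (V.tObj_of_E w hw).symm by simp), F.map_conj]
  simp [-eqToHom_refl]

lemma map_tm_of_M (hw : V.M w)
    (pra : F.obj (V.sObj (V.tm w)) = F.obj (V.sObj w))
    (prb : F.obj (V.tObj w) = F.obj (V.tObj (V.tm w))) :
    F.map (V.tm w) = eqToHom pra ≫ F.map w ≫ eqToHom prb := by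
  rw [F.map_congr (V.tm_of_M w hw),
    F.map_congr (show eqToHom (V.tObj_of_M w hw) ≫ w =
      eqToHom (V.tObj_of_M w hw) ≫ w ≫ eqToHom rfl by simp), F.map_conj]
  simp [-eqToHom_refl]

lemma map_sm_of_E (hw : V.E w)
    (pr : F.obj (V.sObj (V.sm w)) = F.obj (V.tObj (V.sm w))) :
    F.map (V.sm w) = eqToHom pr := by
  rw [F.map_congr (V.sm_of_E w hw), F.map_eqToHom]; simp

lemma map_se_of_M (hw : V.M w)
    (pr : F.obj (V.sObj (V.se w)) = F.obj (V.tObj (V.se w))) :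
    F.map (V.se w) = eqToHom pr := by
  rw [F.map_congr (V.se_of_M w hw), F.map_eqToHom]; simp

lemma map_te_of_M (hw : V.M w)
    (pr : F.obj (V.sObj (V.te w)) = F.obj (V.tObj (V.te w))) :
    F.map (V.te w) = eqToHom pr := by
  rw [F.map_congr (V.te_of_M w hw), F.map_eqToHom]; simp

lemma map_tm_of_E (hw : V.E w)
    (pr : F.obj (V.sObj (V.tm w)) = F.obj (V.tObj (V.tm w))) :
    F.map (V.tm w) = eqToHom pr := by
  rw [F.map_congr (V.tm_of_E w hw), F.map_eqToHom]; simp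

end reduce

lemma key_decomp (F : VFunctor V D) {X Y : C} (f : X ⟶ Y) :
    F.map f =
      eqToHom (congrArg F.obj (V.sObj_of_M (V.sm f) (V.sm_mem f)).symm) ≫
      F.map (V.sm f) ≫
      eqToHom (congrArg F.obj ((V.tObj_of_M (V.sm f) (V.sm_mem f)).trans
        (V.sObj_of_E (V.te f) (V.te_mem f)).symm)) ≫
      F.map (V.te f) ≫
      eqToHom (congrArg F.obj (V.tObj_of_E (V.te f) (V.te_mem f))) := by
  have hu : V.se (V.sm f) ≫ V.sm (V.se f) =
      eqToHom ((V.sObj_of_M (V.sm f) (V.sm_mem f)).trans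
        (V.sObj_of_E (V.se f) (V.se_mem f)).symm) := by
    rw [V.se_of_M (V.sm f) (V.sm_mem f), V.sm_of_E (V.se f) (V.se_mem f), eqToHom_trans]
  have hEu : V.E (V.se (V.sm f) ≫ V.sm (V.se f)) := by
    rw [hu]; exact V.E_eqToHom _
  have hv : V.tm (V.sm f) ≫ V.te (V.se f) =
      eqToHom (V.tObj_of_M (V.sm f) (V.sm_mem f)) ≫ f ≫
        eqToHom (V.tObj_of_E (V.se f) (V.se_mem f)).symm := by
    rw [V.tm_of_M (V.sm f) (V.sm_mem f), V.te_of_E (V.se f) (V.se_mem f),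
      Category.assoc, ← Category.assoc (V.sm f), V.s_fac f]
  have pr1 : F.obj (V.sObj (V.sm (V.se (V.sm f) ≫ V.sm (V.se f)))) =
      F.obj (V.tObj (V.sm (V.se (V.sm f) ≫ V.sm (V.se f)))) := by
    rw [V.sObj_of_M _ (V.sm_mem _), V.tObj_of_M _ (V.sm_mem _), V.sObj_of_E _ hEu]
  have pra : F.obj (V.sObj (V.te (V.tm (V.sm f) ≫ V.te (V.se f)))) =
      F.obj (V.sObj (V.te f)) := by
    rw [V.sObj_of_E _ (V.te_mem _), V.sObj_of_E _ (V.te_mem f), V.tObj_of_M _ (V.sm_mem f)]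
  have prb : F.obj (V.tObj (V.te f)) =
      F.obj (V.tObj (V.te (V.tm (V.sm f) ≫ V.te (V.se f)))) := by
    rw [V.tObj_of_E _ (V.te_mem f), V.tObj_of_E _ (V.te_mem _), hv, V.tObj_conj]
  rw [F.map_congr (V.s_fac f).symm, F.map_comp₁ (V.sm f) (V.se f),
    F.map_sm_of_E hEu pr1, F.map_te_eq _ _ _ hv pra prb]
  simp

lemma key_decomp₂ (F : VFunctor V D) {X Y : C} (f : X ⟶ Y) :
    F.map f =
      eqToHom (congrArg F.obj (V.sObj_of_E (V.se f) (V.se_mem f)).symm) ≫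
      F.map (V.se f) ≫
      eqToHom (congrArg F.obj ((V.tObj_of_E (V.se f) (V.se_mem f)).trans
        (V.sObj_of_M (V.tm f) (V.tm_mem f)).symm)) ≫
      F.map (V.tm f) ≫
      eqToHom (congrArg F.obj (V.tObj_of_M (V.tm f) (V.tm_mem f))) := by
  have hu : V.se (V.te f) ≫ V.sm (V.tm f) =
      eqToHom (V.sObj_of_E (V.te f) (V.te_mem f)) ≫ f ≫
        eqToHom (V.sObj_of_M (V.tm f) (V.tm_mem f)).symm := by
    rw [V.se_of_E (V.te f) (V.te_mem f), V.sm_of_M (V.tm f) (V.tm_mem f),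
      Category.assoc, ← Category.assoc (V.te f), V.t_fac f]
  have hv : V.tm (V.te f) ≫ V.te (V.tm f) =
      eqToHom ((V.tObj_of_E (V.te f) (V.te_mem f)).trans
        (V.tObj_of_M (V.tm f) (V.tm_mem f)).symm) := by
    rw [V.tm_of_E (V.te f) (V.te_mem f), V.te_of_M (V.tm f) (V.tm_mem f), eqToHom_trans]
  have hEv : V.E (V.tm (V.te f) ≫ V.te (V.tm f)) := by
    rw [hv]; exact V.E_eqToHom _
  have pr1 : F.obj (V.sObj (V.tm (V.tm (V.te f) ≫ V.te (V.tm f)))) =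
      F.obj (V.tObj (V.tm (V.tm (V.te f) ≫ V.te (V.tm f)))) :=
    congrArg F.obj ((V.sObj_of_M _ (V.tm_mem _)).trans
      ((V.tObj_of_E _ hEv).symm.trans (V.tObj_of_M _ (V.tm_mem _)).symm))
  have pra : F.obj (V.sObj (V.se (V.se (V.te f) ≫ V.sm (V.tm f)))) =
      F.obj (V.sObj (V.se f)) := by
    rw [V.sObj_of_E _ (V.se_mem _), V.sObj_of_E _ (V.se_mem f), hu, V.sObj_conj]
  have prb : F.obj (V.tObj (V.se f)) =
      F.obj (V.tObj (V.se (V.se (V.te f) ≫ V.sm (V.tm f)))) := by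
    rw [V.tObj_of_E _ (V.se_mem f), V.tObj_of_E _ (V.se_mem _), V.sObj_of_M _ (V.tm_mem f)]
  rw [F.map_congr (V.t_fac f).symm, F.map_comp₂ (V.te f) (V.tm f),
    F.map_tm_of_E hEv pr1, F.map_se_eq _ _ _ hu pra prb]
  simp

end VFunctor

/-- A compatible pair on a variance `(E,M)`: a covariant functor `G` on `E` and a
contravariant functor `H` on `M`, agreeing on objects, with
`G(f^e)∘H(f_m) = H(f^m)∘G(f_e)` for every morphism `f`. -/
structure CompatPair {C : Type u} [Category.{v} C] (V : Variance C)
    (D : Type u₂) [Category.{v₂} D] where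
  obj : C → D
  Gmap : ∀ {X Y : C} (f : X ⟶ Y), V.E f → (obj X ⟶ obj Y)
  Gid : ∀ X : C, Gmap (𝟙 X) (V.E_id X) = 𝟙 (obj X)
  Gcomp : ∀ {X Y Z : C} (f : X ⟶ Y) (g : Y ⟶ Z) (hf : V.E f) (hg : V.E g),
    Gmap (f ≫ g) (V.E_comp f g hf hg) = Gmap f hf ≫ Gmap g hg
  Hmap : ∀ {X Y : C} (f : X ⟶ Y), V.M f → (obj Y ⟶ obj X)
  Hid : ∀ X : C, Hmap (𝟙 X) (V.M_id X) = 𝟙 (obj X)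
  Hcomp : ∀ {X Y Z : C} (f : X ⟶ Y) (g : Y ⟶ Z) (hf : V.M f) (hg : V.M g),
    Hmap (f ≫ g) (V.M_comp f g hf hg) = Hmap g hg ≫ Hmap f hf
  compat : ∀ {X Y : C} (f : X ⟶ Y),
    Hmap (V.sm f) (V.sm_mem f) ≫ Gmap (V.te f) (V.te_mem f) =
      Gmap (V.se f) (V.se_mem f) ≫ Hmap (V.tm f) (V.tm_mem f)

namespace CompatPair

variable {C : Type u} [Category.{v} C] {V : Variance C} {D : Type u₂} [Category.{v₂} D]
  (P : CompatPair V D)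

lemma Gmap_congr {X Y : C} {f g : X ⟶ Y} (h : f = g) (hf : V.E f) (hg : V.E g) :
    P.Gmap f hf = P.Gmap g hg := by subst h; rfl

lemma Hmap_congr {X Y : C} {f g : X ⟶ Y} (h : f = g) (hf : V.M f) (hg : V.M g) :
    P.Hmap f hf = P.Hmap g hg := by subst h; rfl

lemma Gmap_comp' {X Y Z : C} (f : X ⟶ Y) (g : Y ⟶ Z) (hf : V.E f) (hg : V.E g)
    (h : V.E (f ≫ g)) : P.Gmap (f ≫ g) h = P.Gmap f hf ≫ P.Gmap g hg :=
  P.Gcomp f g hf hg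

lemma Hmap_comp' {X Y Z : C} (f : X ⟶ Y) (g : Y ⟶ Z) (hf : V.M f) (hg : V.M g)
    (h : V.M (f ≫ g)) : P.Hmap (f ≫ g) h = P.Hmap g hg ≫ P.Hmap f hf :=
  P.Hcomp f g hf hg

lemma Gmap_eqToHom {X Y : C} (k : X = Y) (hk : V.E (eqToHom k)) :
    P.Gmap (eqToHom k) hk = eqToHom (congrArg P.obj k) := by
  cases k
  rw [P.Gmap_congr (eqToHom_refl X rfl) hk (V.E_id X), P.Gid]
  simp

lemma Hmap_eqToHom {X Y : C} (k : X = Y) (hk : V.M (eqToHom k)) :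
    P.Hmap (eqToHom k) hk = eqToHom (congrArg P.obj k).symm := by
  cases k
  rw [P.Hmap_congr (eqToHom_refl X rfl) hk (V.M_id X), P.Hid]
  simp

end CompatPair

/-- The functor of variance `F` restricts to the compatible pair `P`
(equivalently, `F` is obtained from `P` by `F(f) = G(f^e)∘H(f_m)`). -/
def RestrictsTo {C : Type u} [Category.{v} C] (V : Variance C) {D : Type u₂}
    [Category.{v₂} D] (F : VFunctor V D) (P : CompatPair V D) : Prop :=
  ∃ h : ∀ X : C, F.obj X = P.obj X, ∀ {X Y : C} (f : X ⟶ Y),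
    F.map f = eqToHom (h (V.sObj f)) ≫ P.Hmap (V.sm f) (V.sm_mem f) ≫
      P.Gmap (V.te f) (V.te_mem f) ≫ eqToHom (h (V.tObj f)).symm

section Main

open CategoryTheory

variable {C : Type u} [Category.{v} C] {V : Variance C} {D : Type u₂} [Category.{v₂} D]

/-- The covariant restriction candidate. -/
def VFunctor.gmapOf (F : VFunctor V D) {X Y : C} (f : X ⟶ Y) (hf : V.E f) :
    F.obj X ⟶ F.obj Y :=
  eqToHom (congrArg F.obj (V.sObj_of_E f hf)).symm ≫ F.map f ≫
    eqToHom (congrArg F.obj (V.tObj_of_E f hf))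

/-- The contravariant restriction candidate. -/
def VFunctor.hmapOf (F : VFunctor V D) {X Y : C} (f : X ⟶ Y) (hf : V.M f) :
    F.obj Y ⟶ F.obj X :=
  eqToHom (congrArg F.obj (V.sObj_of_M f hf)).symm ≫ F.map f ≫
    eqToHom (congrArg F.obj (V.tObj_of_M f hf))

/-- The compatible pair obtained by restricting a functor of variance. -/
def VFunctor.toPair (F : VFunctor V D) : CompatPair V D where
  obj := F.obj
  Gmap f hf := F.gmapOf f hf
  Gid X := by
    simp only [VFunctor.gmapOf]
    rw [F.map_id]; simp
  Gcomp f g hf hg := by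
    simp only [VFunctor.gmapOf]
    have hu : V.se f ≫ V.sm g = eqToHom (V.sObj_of_E f hf) ≫ f ≫
        eqToHom (V.sObj_of_E g hg).symm := by
      rw [V.se_of_E f hf, V.sm_of_E g hg, Category.assoc]
    have hv : V.tm f ≫ V.te g = eqToHom (V.tObj_of_E f hf) ≫ g ≫
        eqToHom (V.tObj_of_E g hg).symm := by
      rw [V.tm_of_E f hf, V.te_of_E g hg]
    have pra : F.obj (V.sObj (V.se (V.se f ≫ V.sm g))) = F.obj (V.sObj (V.se f)) := by
      rw [V.sObj_of_E _ (V.se_mem _), V.sObj_of_E _ (V.se_mem f), hu, V.sObj_conj]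
    have prb : F.obj (V.tObj (V.se f)) = F.obj (V.tObj (V.se (V.se f ≫ V.sm g))) := by
      rw [V.tObj_of_E _ (V.se_mem f), V.tObj_of_E _ (V.se_mem _), V.sObj_of_E g hg]
    have pra2 : F.obj (V.sObj (V.se f)) = F.obj (V.sObj f) :=
      congrArg F.obj (V.sObj_of_E _ (V.se_mem f))
    have prb2 : F.obj (V.tObj f) = F.obj (V.tObj (V.se f)) :=
      congrArg F.obj ((V.tObj_of_E f hf).trans (V.tObj_of_E _ (V.se_mem f)).symm)
    have prav : F.obj (V.sObj (V.tm (V.tm f ≫ V.te g))) = F.obj (V.sObj (V.tm g)) :=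
      congrArg F.obj ((V.sObj_of_M _ (V.tm_mem _)).trans
        ((V.tObj_of_E g hg).trans (V.sObj_of_M _ (V.tm_mem g)).symm))
    have prbv : F.obj (V.tObj (V.tm g)) = F.obj (V.tObj (V.tm (V.tm f ≫ V.te g))) := by
      rw [V.tObj_of_M _ (V.tm_mem g), V.tObj_of_M _ (V.tm_mem _), hv, V.tObj_conj]
    have prv : F.obj (V.sObj (V.tm g)) = F.obj (V.tObj (V.tm g)) :=
      congrArg F.obj ((V.sObj_of_M _ (V.tm_mem g)).trans
        ((V.tObj_of_E g hg).symm.trans (V.tObj_of_M _ (V.tm_mem g)).symm))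
    rw [F.map_comp₂ f g, F.map_se_eq _ _ _ hu pra prb, F.map_se_of_E hf pra2 prb2,
      F.map_tm_eq _ _ _ hv prav prbv, F.map_tm_of_E hg prv]
    simp
  Hmap f hf := F.hmapOf f hf
  Hid X := by
    simp only [VFunctor.hmapOf]
    rw [F.map_id]; simp
  Hcomp f g hf hg := by
    simp only [VFunctor.hmapOf]
    have hu : V.se f ≫ V.sm g = eqToHom (V.sObj_of_M f hf) ≫ g ≫
        eqToHom (V.sObj_of_M g hg).symm := by
      rw [V.se_of_M f hf, V.sm_of_M g hg]
    have hv : V.tm f ≫ V.te g = eqToHom (V.tObj_of_M f hf) ≫ f ≫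
        eqToHom (V.tObj_of_M g hg).symm := by
      rw [V.tm_of_M f hf, V.te_of_M g hg, Category.assoc]
    have pra : F.obj (V.sObj (V.sm (V.se f ≫ V.sm g))) = F.obj (V.sObj (V.sm g)) := by
      rw [V.sObj_of_M _ (V.sm_mem _), V.sObj_of_M _ (V.sm_mem g), hu, V.sObj_conj]
    have prb : F.obj (V.tObj (V.sm g)) = F.obj (V.tObj (V.sm (V.se f ≫ V.sm g))) := by
      rw [V.tObj_of_M _ (V.sm_mem g), V.tObj_of_M _ (V.sm_mem _), V.sObj_of_M f hf]
    have pra2 : F.obj (V.sObj (V.sm g)) = F.obj (V.sObj g) :=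
      congrArg F.obj (V.sObj_of_M _ (V.sm_mem g))
    have prb2 : F.obj (V.tObj g) = F.obj (V.tObj (V.sm g)) :=
      congrArg F.obj ((V.tObj_of_M g hg).trans (V.tObj_of_M _ (V.sm_mem g)).symm)
    have prav : F.obj (V.sObj (V.te (V.tm f ≫ V.te g))) = F.obj (V.sObj (V.te f)) :=
      congrArg F.obj ((V.sObj_of_E _ (V.te_mem _)).trans
        ((V.tObj_of_M f hf).trans (V.sObj_of_E _ (V.te_mem f)).symm))
    have prbv : F.obj (V.tObj (V.te f)) = F.obj (V.tObj (V.te (V.tm f ≫ V.te g))) := by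
      rw [V.tObj_of_E _ (V.te_mem f), V.tObj_of_E _ (V.te_mem _), hv, V.tObj_conj]
    have prv : F.obj (V.sObj (V.te f)) = F.obj (V.tObj (V.te f)) :=
      congrArg F.obj ((V.sObj_of_E _ (V.te_mem f)).trans
        ((V.tObj_of_M f hf).symm.trans (V.tObj_of_E _ (V.te_mem f)).symm))
    rw [F.map_comp₁ f g, F.map_sm_eq _ _ _ hu pra prb, F.map_sm_of_M hg pra2 prb2,
      F.map_te_eq _ _ _ hv prav prbv, F.map_te_of_M hf prv]
    simp
  compat f := by
    simp only [VFunctor.gmapOf, VFunctor.hmapOf]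
    have h1 : (eqToHom (congrArg F.obj (V.sObj_of_M (V.sm f) (V.sm_mem f))).symm ≫
        F.map (V.sm f) ≫ eqToHom (congrArg F.obj (V.tObj_of_M (V.sm f) (V.sm_mem f)))) ≫
        eqToHom (congrArg F.obj (V.sObj_of_E (V.te f) (V.te_mem f))).symm ≫
        F.map (V.te f) ≫ eqToHom (congrArg F.obj (V.tObj_of_E (V.te f) (V.te_mem f))) =
        F.map f := by
      rw [F.key_decomp f]; simp
    have h2 : (eqToHom (congrArg F.obj (V.sObj_of_E (V.se f) (V.se_mem f))).symm ≫
        F.map (V.se f) ≫ eqToHom (congrArg F.obj (V.tObj_of_E (V.se f) (V.se_mem f)))) ≫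
        eqToHom (congrArg F.obj (V.sObj_of_M (V.tm f) (V.tm_mem f))).symm ≫
        F.map (V.tm f) ≫ eqToHom (congrArg F.obj (V.tObj_of_M (V.tm f) (V.tm_mem f))) =
        F.map f := by
      rw [F.key_decomp₂ f]; simp
    rw [h1, h2]

/-- The functor of variance obtained from a compatible pair. -/
def CompatPair.toVFunctor (P : CompatPair V D) : VFunctor V D where
  obj := P.obj
  map f := P.Hmap (V.sm f) (V.sm_mem f) ≫ P.Gmap (V.te f) (V.te_mem f)
  map_id X := by
    rw [P.Hmap_congr (V.sm_id X) (V.sm_mem _) (V.M_eqToHom _), P.Hmap_eqToHom,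
        P.Gmap_congr (V.te_id X) (V.te_mem _) (V.E_eqToHom _), P.Gmap_eqToHom]
  map_comp₁ f g := by
    have hL1 : P.Hmap (V.sm (f ≫ g)) (V.sm_mem _) =
        eqToHom (congrArg P.obj (V.sObj_comp f g)) ≫
          P.Hmap (V.sm (V.se f ≫ V.sm g)) (V.sm_mem _) ≫ P.Hmap (V.sm f) (V.sm_mem f) := by
      rw [P.Hmap_congr (V.sm_comp f g) (V.sm_mem _)
            (V.M_comp _ _ (V.M_comp _ _ (V.sm_mem f) (V.sm_mem _)) (V.M_eqToHom _)),
          P.Hmap_comp' _ _ (V.M_comp _ _ (V.sm_mem f) (V.sm_mem _)) (V.M_eqToHom _) _,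
          P.Hmap_comp' _ _ (V.sm_mem f) (V.sm_mem _) _, P.Hmap_eqToHom]
    have hL2 : P.Gmap (V.te (f ≫ g)) (V.te_mem _) =
        (P.Gmap (V.te f) (V.te_mem f) ≫ P.Gmap (V.te (V.tm f ≫ V.te g)) (V.te_mem _)) ≫
          eqToHom (congrArg P.obj (V.tObj_comp f g)).symm := by
      rw [P.Gmap_congr (V.te_comp f g) (V.te_mem _)
            (V.E_comp _ _ (V.E_comp _ _ (V.te_mem f) (V.te_mem _)) (V.E_eqToHom _)),
          P.Gmap_comp' _ _ (V.E_comp _ _ (V.te_mem f) (V.te_mem _)) (V.E_eqToHom _) _,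
          P.Gmap_comp' _ _ (V.te_mem f) (V.te_mem _) _, P.Gmap_eqToHom]
    have hR1 : P.Hmap (V.sm (V.sm (V.se f ≫ V.sm g))) (V.sm_mem _) =
        eqToHom (congrArg P.obj (V.sObj_of_M _ (V.sm_mem (V.se f ≫ V.sm g)))) ≫
          P.Hmap (V.sm (V.se f ≫ V.sm g)) (V.sm_mem _) := by
      rw [P.Hmap_congr (V.sm_of_M (V.sm (V.se f ≫ V.sm g)) (V.sm_mem _)) (V.sm_mem _)
            (V.M_comp _ _ (V.sm_mem _) (V.M_eqToHom _)),
          P.Hmap_comp' _ _ (V.sm_mem _) (V.M_eqToHom _) _, P.Hmap_eqToHom]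
    have hR2 : P.Gmap (V.te (V.sm (V.se f ≫ V.sm g))) (V.te_mem _) =
        eqToHom (congrArg P.obj (V.tObj_of_M (V.sm (V.se f ≫ V.sm g)) (V.sm_mem _))).symm := by
      rw [P.Gmap_congr (V.te_of_M (V.sm (V.se f ≫ V.sm g)) (V.sm_mem _)) (V.te_mem _)
            (V.E_eqToHom _), P.Gmap_eqToHom]
    have hR3 : P.Hmap (V.sm (V.te (V.tm f ≫ V.te g))) (V.sm_mem _) =
        eqToHom (congrArg P.obj (V.sObj_of_E (V.te (V.tm f ≫ V.te g)) (V.te_mem _))) := by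
      rw [P.Hmap_congr (V.sm_of_E (V.te (V.tm f ≫ V.te g)) (V.te_mem _)) (V.sm_mem _)
            (V.M_eqToHom _), P.Hmap_eqToHom]
    have hR4 : P.Gmap (V.te (V.te (V.tm f ≫ V.te g))) (V.te_mem _) =
        P.Gmap (V.te (V.tm f ≫ V.te g)) (V.te_mem _) ≫
          eqToHom (congrArg P.obj (V.tObj_of_E (V.te (V.tm f ≫ V.te g)) (V.te_mem _))).symm := by
      rw [P.Gmap_congr (V.te_of_E (V.te (V.tm f ≫ V.te g)) (V.te_mem _)) (V.te_mem _)
            (V.E_comp _ _ (V.te_mem _) (V.E_eqToHom _)),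
          P.Gmap_comp' _ _ (V.te_mem _) (V.E_eqToHom _) _, P.Gmap_eqToHom]
    rw [hL1, hL2, hR1, hR2, hR3, hR4]
    simp
  map_comp₂ f g := by
    have hL0 : P.Hmap (V.sm (f ≫ g)) (V.sm_mem _) ≫ P.Gmap (V.te (f ≫ g)) (V.te_mem _) =
        P.Gmap (V.se (f ≫ g)) (V.se_mem _) ≫ P.Hmap (V.tm (f ≫ g)) (V.tm_mem _) :=
      P.compat (f ≫ g)
    have hL1 : P.Gmap (V.se (f ≫ g)) (V.se_mem _) =
        eqToHom (congrArg P.obj (V.sObj_comp f g)) ≫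
          P.Gmap (V.se (V.se f ≫ V.sm g)) (V.se_mem _) ≫ P.Gmap (V.se g) (V.se_mem g) := by
      rw [P.Gmap_congr (V.se_comp f g) (V.se_mem _)
            (V.E_comp _ _ (V.E_eqToHom _) (V.E_comp _ _ (V.se_mem _) (V.se_mem g))),
          P.Gmap_comp' _ _ (V.E_eqToHom _) (V.E_comp _ _ (V.se_mem _) (V.se_mem g)) _,
          P.Gmap_comp' _ _ (V.se_mem _) (V.se_mem g) _, P.Gmap_eqToHom]
    have hL2 : P.Hmap (V.tm (f ≫ g)) (V.tm_mem _) =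
        (P.Hmap (V.tm g) (V.tm_mem g) ≫ P.Hmap (V.tm (V.tm f ≫ V.te g)) (V.tm_mem _)) ≫
          eqToHom (congrArg P.obj (V.tObj_comp f g)).symm := by
      rw [P.Hmap_congr (V.tm_comp f g) (V.tm_mem _)
            (V.M_comp _ _ (V.M_eqToHom _) (V.M_comp _ _ (V.tm_mem _) (V.tm_mem g))),
          P.Hmap_comp' _ _ (V.M_eqToHom _) (V.M_comp _ _ (V.tm_mem _) (V.tm_mem g)) _,
          P.Hmap_comp' _ _ (V.tm_mem _) (V.tm_mem g) _, P.Hmap_eqToHom]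
    have hR1 : P.Hmap (V.sm (V.se (V.se f ≫ V.sm g))) (V.sm_mem _) =
        eqToHom (congrArg P.obj (V.sObj_of_E (V.se (V.se f ≫ V.sm g)) (V.se_mem _))) := by
      rw [P.Hmap_congr (V.sm_of_E (V.se (V.se f ≫ V.sm g)) (V.se_mem _)) (V.sm_mem _)
            (V.M_eqToHom _), P.Hmap_eqToHom]
    have hR2 : P.Gmap (V.te (V.se (V.se f ≫ V.sm g))) (V.te_mem _) =
        P.Gmap (V.se (V.se f ≫ V.sm g)) (V.se_mem _) ≫
          eqToHom (congrArg P.obj (V.tObj_of_E (V.se (V.se f ≫ V.sm g)) (V.se_mem _))).symm := by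
      rw [P.Gmap_congr (V.te_of_E (V.se (V.se f ≫ V.sm g)) (V.se_mem _)) (V.te_mem _)
            (V.E_comp _ _ (V.se_mem _) (V.E_eqToHom _)),
          P.Gmap_comp' _ _ (V.se_mem _) (V.E_eqToHom _) _, P.Gmap_eqToHom]
    have hR3 : P.Hmap (V.sm (V.tm (V.tm f ≫ V.te g))) (V.sm_mem _) =
        eqToHom (congrArg P.obj (V.sObj_of_M (V.tm (V.tm f ≫ V.te g)) (V.tm_mem _))) ≫
          P.Hmap (V.tm (V.tm f ≫ V.te g)) (V.tm_mem _) := by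
      rw [P.Hmap_congr (V.sm_of_M (V.tm (V.tm f ≫ V.te g)) (V.tm_mem _)) (V.sm_mem _)
            (V.M_comp _ _ (V.tm_mem _) (V.M_eqToHom _)),
          P.Hmap_comp' _ _ (V.tm_mem _) (V.M_eqToHom _) _, P.Hmap_eqToHom]
    have hR4 : P.Gmap (V.te (V.tm (V.tm f ≫ V.te g))) (V.te_mem _) =
        eqToHom (congrArg P.obj (V.tObj_of_M (V.tm (V.tm f ≫ V.te g)) (V.tm_mem _))).symm := by
      rw [P.Gmap_congr (V.te_of_M (V.tm (V.tm f ≫ V.te g)) (V.tm_mem _)) (V.te_mem _)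
            (V.E_eqToHom _), P.Gmap_eqToHom]
    rw [hL0, hL1, hL2, hR1, hR2, hR3, hR4]
    simp only [Category.assoc]
    rw [← reassoc_of% (P.compat g)]
    simp

lemma VFunctor.ext' {F G : VFunctor V D} (hobj : F.obj = G.obj)
    (hmap : ∀ {X Y : C} (f : X ⟶ Y), F.map f =
      eqToHom (congrFun hobj (V.sObj f)) ≫ G.map f ≫
        eqToHom (congrFun hobj (V.tObj f)).symm) : F = G := by
  obtain ⟨Fo, Fm, _, _, _⟩ := F
  obtain ⟨Go, Gm, _, _, _⟩ := G
  obtain rfl : Fo = Go := hobj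
  have : @Fm = @Gm := by
    funext X Y f
    simpa using hmap f
  cases this
  rfl

lemma CompatPair.ext' {P Q : CompatPair V D} (hobj : P.obj = Q.obj)
    (hG : ∀ {X Y : C} (f : X ⟶ Y) (hf : V.E f), P.Gmap f hf =
      eqToHom (congrFun hobj X) ≫ Q.Gmap f hf ≫ eqToHom (congrFun hobj Y).symm)
    (hH : ∀ {X Y : C} (f : X ⟶ Y) (hf : V.M f), P.Hmap f hf =
      eqToHom (congrFun hobj Y) ≫ Q.Hmap f hf ≫ eqToHom (congrFun hobj X).symm) :
    P = Q := by
  obtain ⟨Po, PG, _, _, PH, _, _, _⟩ := P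
  obtain ⟨Qo, QG, _, _, QH, _, _, _⟩ := Q
  obtain rfl : Po = Qo := hobj
  have hg : @PG = @QG := by
    funext X Y f hf
    simpa using hG f hf
  have hh : @PH = @QH := by
    funext X Y f hf
    simpa using hH f hf
  cases hg
  cases hh
  rfl

end Main

/-- Decomposition theorem of mixed variance: the restriction assignment
`F ↦ (F|_E, F|_M)` is a bijective correspondence between functors of variance `(E,M)`
and compatible pairs. -/
theorem decomposition_mixed_variance {C : Type u} [Category.{v} C] (V : Variance C)
    {D : Type u₂} [Category.{v₂} D] :
    (∀ F : VFunctor V D, ∃! P : CompatPair V D, RestrictsTo V F P) ∧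
    (∀ P : CompatPair V D, ∃! F : VFunctor V D, RestrictsTo V F P) := by
  constructor
  · intro F
    refine ⟨F.toPair, ⟨fun _ => rfl, ?_⟩, ?_⟩
    · intro X Y f
      simp only [VFunctor.toPair, VFunctor.hmapOf, VFunctor.gmapOf]
      conv_lhs => rw [F.key_decomp f]
      simp [-eqToHom_refl]
      erw [eqToHom_trans_assoc]
    · intro P hP
      obtain ⟨h, hmap⟩ := hP
      refine CompatPair.ext' (funext fun X => (h X).symm) ?_ ?_
      · intro X Y f hf
        have e1 := hmap f
        rw [P.Hmap_congr (V.sm_of_E f hf) (V.sm_mem f) (V.M_eqToHom _), P.Hmap_eqToHom,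
            P.Gmap_congr (V.te_of_E f hf) (V.te_mem f) (V.E_comp _ _ hf (V.E_eqToHom _)),
            P.Gmap_comp' f _ hf (V.E_eqToHom _) _, P.Gmap_eqToHom] at e1
        simp only [VFunctor.toPair, VFunctor.gmapOf]
        rw [e1]
        simp [-eqToHom_refl]
        erw [eqToHom_trans_assoc, eqToHom_trans]
        simp
      · intro X Y f hf
        have e1 := hmap f
        rw [P.Hmap_congr (V.sm_of_M f hf) (V.sm_mem f) (V.M_comp _ _ hf (V.M_eqToHom _)),
            P.Hmap_comp' f _ hf (V.M_eqToHom _) _, P.Hmap_eqToHom,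
            P.Gmap_congr (V.te_of_M f hf) (V.te_mem f) (V.E_eqToHom _), P.Gmap_eqToHom] at e1
        simp only [VFunctor.toPair, VFunctor.hmapOf]
        rw [e1]
        simp [-eqToHom_refl]
        erw [eqToHom_trans_assoc, eqToHom_trans]
        simp
  · intro P
    refine ⟨P.toVFunctor, ⟨fun _ => rfl, ?_⟩, ?_⟩
    · intro X Y f
      simp [CompatPair.toVFunctor]
      erw [eqToHom_refl, eqToHom_refl]
      simp
    · intro F hF
      obtain ⟨h, hmap⟩ := hF
      refine VFunctor.ext' (funext h) ?_
      intro X Y f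
      rw [hmap f]
      simp [CompatPair.toVFunctor]
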